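/- Characterization of the ℤ₂-even bond algebra on a circle of L qubits: the set {O ∈ Mat : O U = U O}, where U = Z₁ Z₂ ⋯ Z_L is the global spin-flip operator, equals the unital subalgebra of Mat generated by the single-site operators {Z_e : e ∈ ℤ/L} together with the nearest-neighbor operators {X_e X_{e+1} : e ∈ ℤ/L} (indices taken mod L). -/

import Mathlib

noncomputable section

/-- The Pauli `X` matrix. -/
def PauliX : Matrix (Fin 2) (Fin 2) ℂ := !![0, 1; 1, 0]

/-- The Pauli `Z` matrix. -/
def PauliZ : Matrix (Fin 2) (Fin 2) ℂ := !![1, 0; 0, -1]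

/-- `Mat L` is the algebra of `2^L × 2^L` complex matrices, realized as matrices indexed
by `Fin L → Fin 2` (the `L`-fold Kronecker product of `2 × 2` matrix algebras). -/
abbrev Mat (L : ℕ) := Matrix (Fin L → Fin 2) (Fin L → Fin 2) ℂ

/-- The `L`-fold Kronecker product of an `L`-tuple of `2 × 2` matrices. -/
def kron {L : ℕ} (A : Fin L → Matrix (Fin 2) (Fin 2) ℂ) : Mat L :=
  Matrix.of fun i j => ∏ k, A k (i k) (j k)

/-- The single-site operator acting as `P` on the `e`-th tensor factor and as the
identity on all others. -/
def siteOp (L : ℕ) (P : Matrix (Fin 2) (Fin 2) ℂ) (e : Fin L) : Mat L :=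
  kron fun m => if m = e then P else 1

end

section Aux

open Matrix

/-! ### Basic `kron` lemmas -/

lemma kron_mul {L : ℕ} (A B : Fin L → Matrix (Fin 2) (Fin 2) ℂ) :
    kron A * kron B = kron (fun k => A k * B k) := by
  ext i j
  simp only [kron, Matrix.mul_apply, Matrix.of_apply, ← Finset.prod_mul_distrib]
  rw [Finset.prod_univ_sum, Fintype.piFinset_univ]

lemma kron_one {L : ℕ} : kron (fun _ : Fin L => (1 : Matrix (Fin 2) (Fin 2) ℂ)) = 1 := by
  ext i j
  simp only [kron, Matrix.of_apply, Matrix.one_apply]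
  by_cases h : i = j
  · subst h; simp
  · rw [if_neg h]
    obtain ⟨m, hm⟩ := Function.ne_iff.mp h
    exact Finset.prod_eq_zero (Finset.mem_univ m) (by simp [Matrix.one_apply, hm])

lemma kron_smul {L : ℕ} (c : Fin L → ℂ) (A : Fin L → Matrix (Fin 2) (Fin 2) ℂ) :
    kron (fun k => c k • A k) = (∏ k, c k) • kron A := by
  ext i j
  simp [kron, Finset.prod_mul_distrib, Matrix.smul_apply]

/-! ### 2×2 facts -/

lemma pauliXX : PauliX * PauliX = 1 := by
  simp [PauliX, Matrix.mul_fin_two, Matrix.one_fin_two]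

lemma pauliXZ : PauliX * PauliZ = (-1 : ℂ) • (PauliZ * PauliX) := by
  ext x y
  fin_cases x <;> fin_cases y <;>
    simp [PauliX, PauliZ, Matrix.mul_apply, Fin.sum_univ_two]

lemma pauliZ_apply (a b : Fin 2) : PauliZ a b = if a = b then ((-1 : ℂ))^(a : ℕ) else 0 := by
  fin_cases a <;> fin_cases b <;> simp [PauliZ]

lemma std_decomp (a b : Fin 2) :
    single a b (1 : ℂ) =
      single a a (1 : ℂ) * (if a = b then 1 else PauliX) := by
  fin_cases a <;> fin_cases b <;>
    ext x y <;> fin_cases x <;> fin_cases y <;>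
      simp [PauliX, Matrix.mul_apply, Fin.sum_univ_two, single]

lemma proj_eq (a : Fin 2) :
    single a a (1 : ℂ) =
      (2⁻¹ : ℂ) • (1 + (if a = 0 then (1:ℂ) else -1) • PauliZ) := by
  fin_cases a <;>
    ext x y <;> fin_cases x <;> fin_cases y <;>
      simp [PauliZ, single, Matrix.one_apply] <;> norm_num

/-! ### The sign function and the diagonal form of `U` -/

def sgn {L : ℕ} (i : Fin L → Fin 2) : ℂ := ∏ k, (-1 : ℂ) ^ (i k : ℕ)

lemma U_diag {L : ℕ} : kron (fun _ : Fin L => PauliZ) = Matrix.diagonal sgn := by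
  ext i j
  simp only [kron, Matrix.of_apply, Matrix.diagonal_apply, pauliZ_apply]
  by_cases h : i = j
  · subst h; simp [sgn]
  · rw [if_neg h]
    obtain ⟨m, hm⟩ := Function.ne_iff.mp h
    exact Finset.prod_eq_zero (Finset.mem_univ m) (by simp [hm])

lemma kron_std {L : ℕ} (i j : Fin L → Fin 2) :
    Matrix.single i j (1 : ℂ) = kron (fun k => Matrix.single (i k) (j k) 1) := by
  ext x y
  simp only [kron, Matrix.of_apply, Matrix.single, Matrix.of_apply]
  by_cases h : i = x ∧ j = y
  · obtain ⟨h1, h2⟩ := h; subst h1; subst h2; simp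
  · rw [if_neg h]
    rw [not_and_or] at h
    rcases h with h | h
    · obtain ⟨m, hm⟩ := Function.ne_iff.mp h
      exact (Finset.prod_eq_zero (Finset.mem_univ m) (by simp [hm])).symm
    · obtain ⟨m, hm⟩ := Function.ne_iff.mp h
      exact (Finset.prod_eq_zero (Finset.mem_univ m) (by simp [hm])).symm

lemma sgn_even {L : ℕ} {i j : Fin L → Fin 2} (h : sgn i = sgn j) :
    Even (Finset.univ.filter (fun k => ¬ i k = j k)).card := by
  have h3 : ∀ a b : Fin 2, ((-1:ℂ))^(a:ℕ) * ((-1:ℂ))^(b:ℕ) = if a = b then 1 else -1 := by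
    intro a b; fin_cases a <;> fin_cases b <;> norm_num
  have h2 : sgn j * sgn j = 1 := by
    rw [sgn, ← Finset.prod_mul_distrib]
    apply Finset.prod_eq_one
    intro k _
    rw [h3]; simp
  have h4 : ∏ k, (if i k = j k then (1:ℂ) else -1) = 1 := by
    calc ∏ k, (if i k = j k then (1:ℂ) else -1)
        = ∏ k, ((-1:ℂ))^((i k : ℕ)) * ((-1:ℂ))^((j k : ℕ)) :=
          Finset.prod_congr rfl (fun k _ => (h3 _ _).symm)
      _ = sgn i * sgn j := by rw [sgn, sgn, Finset.prod_mul_distrib]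
      _ = 1 := by rw [h, h2]
  rw [Finset.prod_ite, Finset.prod_const, Finset.prod_const, one_pow, one_mul] at h4
  exact (neg_one_pow_eq_one_iff_even (by norm_num : (-1:ℂ) ≠ 1)).mp h4

/-! ### `siteOp` lemmas -/

lemma siteOp_apply {L : ℕ} (P : Matrix (Fin 2) (Fin 2) ℂ) (e : Fin L)
    (i j : Fin L → Fin 2) :
    siteOp L P e i j =
      P (i e) (j e) * ∏ m ∈ Finset.univ.erase e, (1 : Matrix (Fin 2) (Fin 2) ℂ) (i m) (j m) := by
  rw [siteOp, kron]
  show (∏ m, (if m = e then P else 1) (i m) (j m)) = _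
  rw [← Finset.mul_prod_erase Finset.univ _ (Finset.mem_univ e), if_pos rfl]
  congr 1
  exact Finset.prod_congr rfl fun m hm => by rw [if_neg (Finset.ne_of_mem_erase hm)]

lemma siteOp_add {L : ℕ} (P Q : Matrix (Fin 2) (Fin 2) ℂ) (e : Fin L) :
    siteOp L (P + Q) e = siteOp L P e + siteOp L Q e := by
  ext i j
  simp [siteOp_apply, add_mul]

lemma siteOp_smul {L : ℕ} (c : ℂ) (P : Matrix (Fin 2) (Fin 2) ℂ) (e : Fin L) :
    siteOp L (c • P) e = c • siteOp L P e := by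
  ext i j
  simp [siteOp_apply, mul_assoc]

lemma siteOp_one {L : ℕ} (e : Fin L) : siteOp L 1 e = 1 := by
  rw [siteOp]
  simp only [ite_self]
  exact kron_one

lemma siteOp_mul {L : ℕ} (P Q : Matrix (Fin 2) (Fin 2) ℂ) (e : Fin L) :
    siteOp L P e * siteOp L Q e = siteOp L (P * Q) e := by
  rw [siteOp, siteOp, siteOp, kron_mul]
  refine congrArg kron (funext fun m => ?_)
  by_cases h : m = e <;> simp [h]

lemma siteOpX_comm {L : ℕ} (a b : Fin L) :
    siteOp L PauliX a * siteOp L PauliX b = siteOp L PauliX b * siteOp L PauliX a := by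
  rw [siteOp, siteOp, kron_mul, kron_mul]
  refine congrArg kron (funext fun m => ?_)
  by_cases h1 : m = a <;> by_cases h2 : m = b <;> simp [h1, h2]

lemma siteOpX_sq {L : ℕ} (a : Fin L) :
    siteOp L PauliX a * siteOp L PauliX a = 1 := by
  rw [siteOp_mul, pauliXX, siteOp_one]

end Aux

section Main

open Matrix
open Fin.NatCast

variable (L : ℕ) [NeZero L]

/-- The generating set of the bond algebra. -/
def gens : Set (Mat L) :=
  {x : Mat L | ∃ e : Fin L, x = siteOp L PauliZ e} ∪
    {x : Mat L | ∃ e : Fin L, x = siteOp L PauliX e * siteOp L PauliX (e + 1)}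

variable {L}

lemma chain_mem (n : ℕ) :
    siteOp L PauliX 0 * siteOp L PauliX (n : Fin L) ∈ Algebra.adjoin ℂ (gens L) := by
  induction n with
  | zero => rw [Nat.cast_zero, siteOpX_sq]; exact one_mem _
  | succ n ih =>
      have hgen : siteOp L PauliX (n : Fin L) * siteOp L PauliX ((n : Fin L) + 1)
          ∈ Algebra.adjoin ℂ (gens L) :=
        Algebra.subset_adjoin (Or.inr ⟨(n : Fin L), rfl⟩)
      have key : siteOp L PauliX 0 * siteOp L PauliX ((n : Fin L) + 1) =
          (siteOp L PauliX 0 * siteOp L PauliX (n : Fin L)) *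
            (siteOp L PauliX (n : Fin L) * siteOp L PauliX ((n : Fin L) + 1)) := by
        rw [mul_assoc, ← mul_assoc (siteOp L PauliX (n : Fin L)), siteOpX_sq, one_mul]
      rw [Nat.cast_succ, key]
      exact mul_mem ih hgen

lemma pair_mem (a b : Fin L) :
    siteOp L PauliX a * siteOp L PauliX b ∈ Algebra.adjoin ℂ (gens L) := by
  have ha := chain_mem (L := L) a.val
  have hb := chain_mem (L := L) b.val
  rw [Fin.cast_val_eq_self] at ha hb
  have key : siteOp L PauliX a * siteOp L PauliX b =
      (siteOp L PauliX 0 * siteOp L PauliX a) * (siteOp L PauliX 0 * siteOp L PauliX b) := by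
    rw [mul_assoc, ← mul_assoc (siteOp L PauliX a), siteOpX_comm a 0,
      mul_assoc (siteOp L PauliX 0), ← mul_assoc, ← mul_assoc, siteOpX_sq, one_mul]
  rw [key]
  exact mul_mem ha hb

lemma proj_siteOp_mem (c : Fin 2) (e : Fin L) :
    siteOp L (single c c (1 : ℂ)) e ∈ Algebra.adjoin ℂ (gens L) := by
  rw [proj_eq, siteOp_smul, siteOp_add, siteOp_one, siteOp_smul]
  have hz : siteOp L PauliZ e ∈ Algebra.adjoin ℂ (gens L) :=
    Algebra.subset_adjoin (Or.inl ⟨e, rfl⟩)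
  exact Subalgebra.smul_mem _ (add_mem (one_mem _) (Subalgebra.smul_mem _ hz _)) _

lemma diag_aux (i : Fin L → Fin 2) (S : Finset (Fin L)) :
    kron (fun k => if k ∈ S then single (i k) (i k) (1:ℂ) else 1)
      ∈ Algebra.adjoin ℂ (gens L) := by
  induction S using Finset.induction with
  | empty =>
      simp only [Finset.notMem_empty, if_false]
      rw [kron_one]; exact one_mem _
  | @insert a S ha ih =>
      have key : kron (fun k => if k ∈ insert a S then single (i k) (i k) (1:ℂ) else 1)
          = siteOp L (single (i a) (i a) 1) a *
              kron (fun k => if k ∈ S then single (i k) (i k) (1:ℂ) else 1) := by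
        rw [siteOp, kron_mul]
        refine congrArg kron (funext fun k => ?_)
        by_cases h1 : k = a
        · subst h1; simp [ha]
        · by_cases h2 : k ∈ S <;> simp [h1, h2, Finset.mem_insert]
      rw [key]
      exact mul_mem (proj_siteOp_mem _ _) ih

lemma xset_mem : ∀ (n : ℕ) (S : Finset (Fin L)), S.card = n → Even n →
    kron (fun k => if k ∈ S then PauliX else 1) ∈ Algebra.adjoin ℂ (gens L) := by
  intro n
  induction n using Nat.strong_induction_on with
  | _ n ih =>
    intro S hcard heven
    match n, heven with
    | 1, heven => exact absurd heven (by decide)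
    | 0, _ =>
        have hS : S = ∅ := Finset.card_eq_zero.mp hcard
        subst hS
        simp only [Finset.notMem_empty, if_false]
        rw [kron_one]; exact one_mem _
    | (n+2), heven =>
        obtain ⟨a, ha⟩ : S.Nonempty := Finset.card_pos.mp (by omega)
        obtain ⟨b, hb⟩ : (S.erase a).Nonempty := by
          apply Finset.card_pos.mp
          rw [Finset.card_erase_of_mem ha]; omega
        have hba : b ≠ a := Finset.ne_of_mem_erase hb
        have hbS : b ∈ S := Finset.mem_of_mem_erase hb
        set T := (S.erase a).erase b with hT
        have hTcard : T.card = n := by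
          rw [hT, Finset.card_erase_of_mem hb, Finset.card_erase_of_mem ha]; omega
        have haT : a ∉ T := fun h => (Finset.ne_of_mem_erase (Finset.mem_of_mem_erase h)) rfl
        have hbT : b ∉ T := fun h => (Finset.ne_of_mem_erase h) rfl
        have hTS : ∀ k, k ∈ T → k ∈ S := fun k h =>
          Finset.mem_of_mem_erase (Finset.mem_of_mem_erase h)
        have key : kron (fun k => if k ∈ S then PauliX else 1)
            = siteOp L PauliX a * siteOp L PauliX b *
                kron (fun k => if k ∈ T then PauliX else 1) := by
          rw [siteOp, siteOp, kron_mul, kron_mul]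
          refine congrArg kron (funext fun k => ?_)
          by_cases h1 : k = a
          · subst h1; simp [ha, Ne.symm hba, haT]
          · by_cases h2 : k = b
            · subst h2; simp [hbS, h1, hbT]
            · by_cases h3 : k ∈ T
              · simp [h1, h2, h3, hTS k h3]
              · have hkS : k ∉ S := by
                  intro hk
                  exact h3 (by rw [hT]; exact Finset.mem_erase.mpr ⟨h2, Finset.mem_erase.mpr ⟨h1, hk⟩⟩)
                simp [h1, h2, h3, hkS]
        rw [key]
        refine mul_mem (pair_mem a b) (ih n (by omega) T hTcard ?_)
        obtain ⟨m, hm⟩ := heven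
        exact ⟨m - 1, by omega⟩

lemma std_mem (i j : Fin L → Fin 2) (h : sgn i = sgn j) :
    Matrix.single i j (1 : ℂ) ∈ Algebra.adjoin ℂ (gens L) := by
  rw [kron_std]
  set S : Finset (Fin L) := Finset.univ.filter (fun k => ¬ i k = j k) with hS
  have key : kron (fun k => Matrix.single (i k) (j k) (1:ℂ))
      = kron (fun k => if k ∈ (Finset.univ : Finset (Fin L))
            then single (i k) (i k) (1:ℂ) else 1) *
          kron (fun k => if k ∈ S then PauliX else 1) := by
    rw [kron_mul]
    refine congrArg kron (funext fun k => ?_)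
    rw [std_decomp]
    simp only [Finset.mem_univ, if_true]
    congr 1
    by_cases hk : i k = j k <;> simp [hS, hk]
  rw [key]
  exact mul_mem (diag_aux i Finset.univ) (xset_mem S.card S rfl (sgn_even h))

end Main

/-- Characterization of the `ℤ₂`-even bond algebra on a circle of `L`
qubits: the set of operators commuting with the global spin flip `U = Z^{⊗L}` equals
the unital subalgebra generated by the single-site operators `Z_e` together with the
nearest-neighbor operators `X_e X_{e+1}` (indices mod `L`). -/
theorem bond_algebra_characterization (L : ℕ) [NeZero L] :
    {O : Mat L | O * kron (fun _ => PauliZ) = kron (fun _ => PauliZ) * O} =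
      (Algebra.adjoin ℂ
        ({x : Mat L | ∃ e : Fin L, x = siteOp L PauliZ e} ∪
          {x : Mat L | ∃ e : Fin L, x = siteOp L PauliX e * siteOp L PauliX (e + 1)}) :
        Set (Mat L)) := by
  have hgens : ({x : Mat L | ∃ e : Fin L, x = siteOp L PauliZ e} ∪
      {x : Mat L | ∃ e : Fin L, x = siteOp L PauliX e * siteOp L PauliX (e + 1)}) = gens L := rfl
  rw [hgens]
  apply Set.Subset.antisymm
  · -- hard direction: commutant ⊆ adjoin
    intro O hO
    simp only [Set.mem_setOf_eq, U_diag] at hO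
    have hcond : ∀ i j, O i j * sgn j = sgn i * O i j := by
      intro i j
      have := congrFun (congrFun hO i) j
      rwa [Matrix.mul_diagonal, Matrix.diagonal_mul] at this
    show O ∈ Algebra.adjoin ℂ (gens L)
    rw [Matrix.matrix_eq_sum_single O]
    apply Subalgebra.sum_mem
    intro i _
    apply Subalgebra.sum_mem
    intro j _
    by_cases hz : O i j = 0
    · rw [hz, Matrix.single_zero]; exact zero_mem _
    · have hsgn : sgn i = sgn j := by
        have h := hcond i j
        rw [mul_comm (sgn i)] at h
        exact (mul_left_cancel₀ hz h).symm
      have : Matrix.single i j (O i j) = O i j • Matrix.single i j 1 := by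
        rw [Matrix.smul_single, smul_eq_mul, mul_one]
      rw [this]
      exact Subalgebra.smul_mem _ (std_mem i j hsgn) _
  · -- easy direction: adjoin ⊆ commutant
    have hle : Algebra.adjoin ℂ (gens L) ≤
        Subalgebra.centralizer ℂ {kron (fun _ : Fin L => PauliZ)} := by
      apply Algebra.adjoin_le
      rintro x (⟨e, rfl⟩ | ⟨e, rfl⟩) <;>
        rw [SetLike.mem_coe, Subalgebra.mem_centralizer_iff] <;> rintro g ⟨rfl⟩
      · -- Z_e commutes with U
        rw [siteOp, kron_mul, kron_mul]
        refine congrArg kron (funext fun m => ?_)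
        by_cases h : m = e <;> simp [h]
      · -- X_e X_{e+1} commutes with U
        rw [siteOp, siteOp, kron_mul, kron_mul, kron_mul]
        have step : (fun m => (fun _ : Fin L => PauliZ) m *
              ((if m = e then PauliX else 1) * (if m = e + 1 then PauliX else 1)))
            = fun m => ((if m = e then (-1:ℂ) else 1) * (if m = e + 1 then (-1:ℂ) else 1)) •
              (((if m = e then PauliX else 1) * (if m = e + 1 then PauliX else 1)) * PauliZ) := by
          funext m
          rcases eq_or_ne m e with h1 | h1 <;> rcases eq_or_ne m (e + 1) with h2 | h2
          · rw [if_pos h1, if_pos h2, if_pos h1, if_pos h2, pauliXX]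
            simp
          · rw [if_pos h1, if_neg h2, if_pos h1, if_neg h2]
            simp [pauliXZ, smul_smul]
          · rw [if_neg h1, if_pos h2, if_neg h1, if_pos h2]
            simp [pauliXZ, smul_smul]
          · rw [if_neg h1, if_neg h2, if_neg h1, if_neg h2]
            simp
        rw [step, kron_smul]
        have hprod : (∏ m : Fin L, ((if m = e then (-1:ℂ) else 1) *
            (if m = e + 1 then (-1:ℂ) else 1))) = 1 := by
          rw [Finset.prod_mul_distrib, Finset.prod_ite_eq', Finset.prod_ite_eq']
          simp
        rw [hprod, one_smul]
    intro O hO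
    have := hle hO
    rw [Subalgebra.mem_centralizer_iff] at this
    have h := this (kron (fun _ : Fin L => PauliZ)) rfl
    exact h.symm
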